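/- Let G be a d-regular simple graph on a nonempty finite vertex set V with d ≥ 1, let A be its normalized adjacency matrix (A(u,v) = 1/d if u and v are adjacent, else 0), and let λ ≥ 0 be such that for every v : V → ℝ with Σ_{a∈V} v(a) = 0 one has ‖A v‖₂ ≤ λ·‖v‖₂ (the second largest singular value of G is at most λ). Let k ≥ 1 and let W_G(k) be the set of walks on k vertices with the uniform measure. Then for every z ∈ F₂^V with |E_{a∈V} (−1)^{z_a}| ≤ β₀ (uniform average over V), the parity along a random walk satisfies |E_{w∈W_G(k)} (−1)^{z_{w₁} + z_{w₂} + ⋯ + z_{w_k}}| ≤ (β₀ + 2λ)^{⌊k/2⌋}. That is, the direct sum lifting over length-(k−1) walks of G is a (β₀, (β₀+2λ)^{⌊k/2⌋})-parity sampler. -/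

import Mathlib

open Finset
open scoped Classical
set_option linter.unusedSectionVars false

variable {V : Type} [Fintype V]

/-- Euclidean norm of a vector. -/
noncomputable def TSN (x : V → ℝ) : ℝ := Real.sqrt (∑ a, x a ^ 2)

lemma TSN_nonneg (x : V → ℝ) : 0 ≤ TSN x := Real.sqrt_nonneg _

lemma TSN_sq (x : V → ℝ) : TSN x ^ 2 = ∑ a, x a ^ 2 :=
  Real.sq_sqrt (Finset.sum_nonneg fun a _ => sq_nonneg _)

lemma TSN_CS (x y : V → ℝ) : |∑ a, x a * y a| ≤ TSN x * TSN y := by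
  have h := Finset.sum_mul_sq_le_sq_mul_sq univ x y
  have := Real.sqrt_le_sqrt h
  rwa [Real.sqrt_sq_eq_abs, Real.sqrt_mul (Finset.sum_nonneg fun a _ => sq_nonneg _)] at this

lemma TSN_add (x y : V → ℝ) : TSN (fun a => x a + y a) ≤ TSN x + TSN y := by
  have h1 : (∑ a, (x a + y a) ^ 2) ≤ (TSN x + TSN y) ^ 2 := by
    have expand : (∑ a, (x a + y a) ^ 2) = (∑ a, x a ^ 2) + 2 * (∑ a, x a * y a) + ∑ a, y a ^ 2 := by
      rw [Finset.mul_sum, ← Finset.sum_add_distrib, ← Finset.sum_add_distrib]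
      exact Finset.sum_congr rfl fun a _ => by ring
    have hcs : (∑ a, x a * y a) ≤ TSN x * TSN y := le_trans (le_abs_self _) (TSN_CS x y)
    have : (TSN x + TSN y) ^ 2 = TSN x ^ 2 + 2 * (TSN x * TSN y) + TSN y ^ 2 := by ring
    rw [expand, this, TSN_sq, TSN_sq]
    linarith
  calc TSN (fun a => x a + y a) = Real.sqrt (∑ a, (x a + y a) ^ 2) := rfl
    _ ≤ Real.sqrt ((TSN x + TSN y) ^ 2) := Real.sqrt_le_sqrt h1
    _ = |TSN x + TSN y| := Real.sqrt_sq_eq_abs _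
    _ = TSN x + TSN y := abs_of_nonneg (add_nonneg (TSN_nonneg x) (TSN_nonneg y))

lemma TSN_const (c : ℝ) : TSN (fun _ : V => c) = |c| * Real.sqrt (Fintype.card V) := by
  unfold TSN
  rw [Finset.sum_const, Finset.card_univ, nsmul_eq_mul, Real.sqrt_mul (by positivity),
    Real.sqrt_sq_eq_abs, mul_comm]

lemma TSN_sign_mul (f x : V → ℝ) (hf : ∀ a, f a ^ 2 = 1) :
    TSN (fun a => f a * x a) = TSN x := by
  unfold TSN
  congr 1
  apply Finset.sum_congr rfl
  intro a _
  rw [mul_pow, hf a, one_mul]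

/-- Pythagoras: if `∑ y = 0`, `∑ (c + y a)² = n c² + ∑ y²`. -/
lemma TSN_pythagoras (c : ℝ) (y : V → ℝ) (hy : (∑ a, y a) = 0) :
    (∑ a, (c + y a) ^ 2) = (Fintype.card V) * c ^ 2 + ∑ a, y a ^ 2 := by
  have : (∑ a, (c + y a) ^ 2) = (∑ a, (c ^ 2 + 2 * c * y a + y a ^ 2)) := by
    congr 1; ext a; ring
  rw [this, Finset.sum_add_distrib, Finset.sum_add_distrib, Finset.sum_const, ← Finset.mul_sum,
    hy, Finset.card_univ, nsmul_eq_mul, mul_zero, add_zero]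

lemma TSN_sub_mean_le (c : ℝ) (y : V → ℝ) (hy : (∑ a, y a) = 0) :
    TSN y ≤ TSN (fun a => c + y a) := by
  apply Real.sqrt_le_sqrt
  rw [TSN_pythagoras c y hy]
  have h1 : (0:ℝ) ≤ (Fintype.card V) * c ^ 2 := by positivity
  have h2 : (0:ℝ) ≤ ∑ a, y a ^ 2 := Finset.sum_nonneg fun a _ => sq_nonneg _
  linarith

lemma TSN_mean_le (c : ℝ) (y : V → ℝ) (hy : (∑ a, y a) = 0) :
    |c| * Real.sqrt (Fintype.card V) ≤ TSN (fun a => c + y a) := by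
  have : |c| * Real.sqrt (Fintype.card V) = Real.sqrt ((Fintype.card V) * c ^ 2) := by
    rw [Real.sqrt_mul (by positivity), Real.sqrt_sq_eq_abs, mul_comm]
  rw [this]
  apply Real.sqrt_le_sqrt
  rw [TSN_pythagoras c y hy]
  have : (0:ℝ) ≤ ∑ a, y a ^ 2 := Finset.sum_nonneg fun a _ => sq_nonneg _
  linarith

/-- Normalized adjacency operator. -/
noncomputable def TAv (G : SimpleGraph V) (d : ℕ) (x : V → ℝ) : V → ℝ :=
  fun a => ∑ b, (if G.Adj a b then (1 : ℝ) / (d : ℝ) else 0) * x b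

section
variable {G : SimpleGraph V} {d : ℕ} (hd : 1 ≤ d) (hreg : G.IsRegularOfDegree d)
include hd hreg

lemma TAv_rowsum (a : V) : (∑ b, (if G.Adj a b then (1 : ℝ) / (d : ℝ) else 0)) = 1 := by
  rw [← Finset.sum_filter, Finset.sum_const]
  have hcard : (Finset.univ.filter fun b => G.Adj a b).card = d := by
    rw [← SimpleGraph.neighborFinset_eq_filter]
    exact hreg a
  rw [hcard, nsmul_eq_mul]
  field_simp

lemma TAv_colsum (b : V) : (∑ a, (if G.Adj a b then (1 : ℝ) / (d : ℝ) else 0)) = 1 := by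
  have : ∀ a, (if G.Adj a b then (1 : ℝ) / (d : ℝ) else 0) =
      (if G.Adj b a then (1 : ℝ) / (d : ℝ) else 0) := by
    intro a; simp only [SimpleGraph.adj_comm]
  rw [Finset.sum_congr rfl fun a _ => this a]
  exact TAv_rowsum hd hreg b

lemma TAv_add_const (c : ℝ) (y : V → ℝ) (a : V) :
    TAv G d (fun b => c + y b) a = c + TAv G d y a := by
  unfold TAv
  rw [show (∑ b, (if G.Adj a b then (1 : ℝ) / (d : ℝ) else 0) * (c + y b)) =
      (∑ b, ((if G.Adj a b then (1 : ℝ) / (d : ℝ) else 0) * c +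
        (if G.Adj a b then (1 : ℝ) / (d : ℝ) else 0) * y b)) from
    Finset.sum_congr rfl fun b _ => by ring]
  rw [Finset.sum_add_distrib, ← Finset.sum_mul, TAv_rowsum hd hreg a, one_mul]

lemma TAv_symm (x y : V → ℝ) : (∑ a, TAv G d x a * y a) = ∑ a, x a * TAv G d y a := by
  unfold TAv
  rw [show (∑ a, (∑ b, (if G.Adj a b then (1 : ℝ) / (d : ℝ) else 0) * x b) * y a) =
      ∑ a, ∑ b, (if G.Adj a b then (1 : ℝ) / (d : ℝ) else 0) * x b * y a from
    Finset.sum_congr rfl fun a _ => Finset.sum_mul ..]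
  rw [Finset.sum_comm]
  apply Finset.sum_congr rfl
  intro b _
  rw [Finset.mul_sum]
  apply Finset.sum_congr rfl
  intro a _
  rw [SimpleGraph.adj_comm]
  ring

lemma TAv_contract (x : V → ℝ) : TSN (TAv G d x) ≤ TSN x := by
  apply Real.sqrt_le_sqrt
  have key : ∀ a, (TAv G d x a) ^ 2 ≤
      ∑ b, (if G.Adj a b then (1 : ℝ) / (d : ℝ) else 0) * x b ^ 2 := by
    intro a
    set p : V → ℝ := fun b => if G.Adj a b then (1 : ℝ) / (d : ℝ) else 0 with hp
    have hpnn : ∀ b, 0 ≤ p b := fun b => by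
      rw [hp]; dsimp only; split <;> positivity
    have h := Finset.sum_mul_sq_le_sq_mul_sq univ (fun b => Real.sqrt (p b))
      (fun b => Real.sqrt (p b) * x b)
    have e1 : (∑ b, Real.sqrt (p b) * (Real.sqrt (p b) * x b)) = ∑ b, p b * x b := by
      apply Finset.sum_congr rfl; intro b _
      rw [← mul_assoc, Real.mul_self_sqrt (hpnn b)]
    have e2 : (∑ b, Real.sqrt (p b) ^ 2) = ∑ b, p b := by
      apply Finset.sum_congr rfl; intro b _; exact Real.sq_sqrt (hpnn b)
    have e3 : (∑ b, (Real.sqrt (p b) * x b) ^ 2) = ∑ b, p b * x b ^ 2 := by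
      apply Finset.sum_congr rfl; intro b _
      rw [mul_pow, Real.sq_sqrt (hpnn b)]
    rw [e1, e2, e3] at h
    rw [TAv_rowsum hd hreg a, one_mul] at h
    exact h
  calc (∑ a, (TAv G d x a) ^ 2)
      ≤ ∑ a, ∑ b, (if G.Adj a b then (1 : ℝ) / (d : ℝ) else 0) * x b ^ 2 :=
        Finset.sum_le_sum fun a _ => key a
    _ = ∑ b, (∑ a, (if G.Adj a b then (1 : ℝ) / (d : ℝ) else 0)) * x b ^ 2 := by
        rw [Finset.sum_comm]
        exact Finset.sum_congr rfl fun b _ => (Finset.sum_mul ..).symm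
    _ = ∑ b, x b ^ 2 := by
        apply Finset.sum_congr rfl; intro b _
        rw [TAv_colsum hd hreg b, one_mul]
end

section Analytic
variable {G : SimpleGraph V} {d : ℕ} (hd : 1 ≤ d) (hreg : G.IsRegularOfDegree d)
  [Nonempty V]
  {lam : ℝ} (hlam : 0 ≤ lam)
  (hexp : ∀ v : V → ℝ, (∑ a, v a) = 0 →
      Real.sqrt (∑ a, (∑ b, (if G.Adj a b then (1 : ℝ) / (d : ℝ) else 0) * v b) ^ 2)
        ≤ lam * Real.sqrt (∑ a, v a ^ 2))
  {f : V → ℝ} (hf : ∀ a, f a ^ 2 = 1)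

lemma card_pos' : (0:ℝ) < (Fintype.card V : ℝ) := by
  exact_mod_cast Fintype.card_pos

include hd hreg hlam hexp hf in
lemma TAv_mul_bound (x : V → ℝ) :
    TSN (TAv G d (fun a => f a * x a)) ≤
      |(∑ a, f a * x a) / (Fintype.card V : ℝ)| * Real.sqrt (Fintype.card V) + lam * TSN x := by
  set n : ℝ := (Fintype.card V : ℝ) with hn
  have hnpos : (0:ℝ) < n := card_pos'
  set c : ℝ := (∑ a, f a * x a) / n with hc
  set y : V → ℝ := fun a => f a * x a - c with hy
  have hysum : (∑ a, y a) = 0 := by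
    rw [hy]
    simp only
    rw [Finset.sum_sub_distrib, Finset.sum_const, Finset.card_univ, nsmul_eq_mul, hc]
    field_simp
    rw [hn]; ring
  have hdecomp : (fun a => f a * x a) = fun a => c + y a := by
    funext a; rw [hy]; ring
  have hAv : ∀ a, TAv G d (fun a => f a * x a) a = c + TAv G d y a := by
    intro a; rw [hdecomp]; exact TAv_add_const hd hreg c y a
  have h1 : TSN (TAv G d (fun a => f a * x a)) = TSN (fun a => c + TAv G d y a) := by
    congr 1; funext a; exact hAv a
  have h2 : TSN (fun a => c + TAv G d y a) ≤ TSN (fun _ => c) + TSN (TAv G d y) :=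
    TSN_add _ _
  have h3 : TSN (TAv G d y) ≤ lam * TSN y := hexp y hysum
  have h4 : TSN y ≤ TSN (fun a => f a * x a) := by
    have := TSN_sub_mean_le c y hysum
    rwa [← hdecomp] at this
  have h5 : TSN (fun a => f a * x a) = TSN x := TSN_sign_mul f x hf
  have h6 : TSN (fun _ : V => c) = |c| * Real.sqrt n := TSN_const c
  calc TSN (TAv G d (fun a => f a * x a)) ≤ TSN (fun _ => c) + TSN (TAv G d y) := by
        rw [h1]; exact h2
    _ ≤ |c| * Real.sqrt n + lam * TSN x := by
        rw [h6]
        have : lam * TSN y ≤ lam * TSN x := by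
          apply mul_le_mul_of_nonneg_left _ hlam
          rw [← h5]; exact h4
        linarith

variable {b0 : ℝ} (hfb : |∑ a, f a| ≤ b0 * (Fintype.card V : ℝ))

include hfb in
lemma b0_nonneg : 0 ≤ b0 := by
  have hn : (0:ℝ) < (Fintype.card V : ℝ) := card_pos'
  nlinarith [abs_nonneg (∑ a, f a)]

include hd hreg hlam hexp hf hfb in
lemma TAv_f_bound : TSN (TAv G d f) ≤ (b0 + lam) * Real.sqrt (Fintype.card V) := by
  set n : ℝ := (Fintype.card V : ℝ) with hn
  have hnpos : (0:ℝ) < n := card_pos'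
  have h := TAv_mul_bound hd hreg hlam hexp hf (fun _ : V => 1)
  have e1 : (fun a => f a * (fun _ : V => 1) a) = f := by funext a; simp
  rw [e1] at h
  have e2 : TSN (fun _ : V => 1) = Real.sqrt n := by
    rw [TSN_const]; simp
    rw [hn]
  rw [e2] at h
  have e3 : |(∑ a, f a) / n| ≤ b0 := by
    rw [abs_div, abs_of_pos hnpos, div_le_iff₀ hnpos]
    exact hfb
  calc TSN (TAv G d f) ≤ |(∑ a, f a) / n| * Real.sqrt n + lam * Real.sqrt n := h
    _ ≤ b0 * Real.sqrt n + lam * Real.sqrt n := by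
        have := Real.sqrt_nonneg n
        nlinarith
    _ = (b0 + lam) * Real.sqrt n := by ring

include hd hreg hlam hexp hf hfb in
lemma key2 (y : V → ℝ) :
    TSN (TAv G d (fun a => f a * TAv G d y a)) ≤ (b0 + 2 * lam) * TSN y := by
  set n : ℝ := (Fintype.card V : ℝ) with hn
  have hnpos : (0:ℝ) < n := card_pos'
  have hsqrt : Real.sqrt n * Real.sqrt n = n := Real.mul_self_sqrt (le_of_lt hnpos)
  have h := TAv_mul_bound hd hreg hlam hexp hf (TAv G d y)
  have hsym : (∑ a, f a * TAv G d y a) = ∑ a, TAv G d f a * y a := (TAv_symm hd hreg f y).symm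
  have hCS : |∑ a, TAv G d f a * y a| ≤ ((b0 + lam) * Real.sqrt n) * TSN y := by
    calc |∑ a, TAv G d f a * y a| ≤ TSN (TAv G d f) * TSN y := TSN_CS _ _
      _ ≤ ((b0 + lam) * Real.sqrt n) * TSN y := by
          apply mul_le_mul_of_nonneg_right _ (TSN_nonneg y)
          exact TAv_f_bound hd hreg hlam hexp hf hfb
  have hcb : |(∑ a, f a * TAv G d y a) / n| * Real.sqrt n ≤ (b0 + lam) * TSN y := by
    rw [hsym, abs_div, abs_of_pos hnpos, div_mul_eq_mul_div, div_le_iff₀ hnpos]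
    calc |∑ a, TAv G d f a * y a| * Real.sqrt n
        ≤ (((b0 + lam) * Real.sqrt n) * TSN y) * Real.sqrt n := by
          apply mul_le_mul_of_nonneg_right hCS (Real.sqrt_nonneg n)
      _ = (b0 + lam) * TSN y * n := by linear_combination ((b0 + lam) * TSN y) * hsqrt
  have hA : lam * TSN (TAv G d y) ≤ lam * TSN y :=
    mul_le_mul_of_nonneg_left (TAv_contract hd hreg y) hlam
  calc TSN (TAv G d (fun a => f a * TAv G d y a))
      ≤ |(∑ a, f a * TAv G d y a) / n| * Real.sqrt n + lam * TSN (TAv G d y) := h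
    _ ≤ (b0 + lam) * TSN y + lam * TSN y := add_le_add hcb hA
    _ = (b0 + 2 * lam) * TSN y := by ring

end Analytic

/-- One step of the walk operator `D∘A` : multiply by signs after averaging. -/
noncomputable def Tstep {V : Type} [Fintype V] (G : SimpleGraph V) (d : ℕ) (f : V → ℝ) :
    (V → ℝ) → (V → ℝ) :=
  fun y => fun a => f a * TAv G d y a

section Iter
variable {G : SimpleGraph V} {d : ℕ} (hd : 1 ≤ d) (hreg : G.IsRegularOfDegree d)
  [Nonempty V]
  {lam : ℝ} (hlam : 0 ≤ lam)
  (hexp : ∀ v : V → ℝ, (∑ a, v a) = 0 →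
      Real.sqrt (∑ a, (∑ b, (if G.Adj a b then (1 : ℝ) / (d : ℝ) else 0) * v b) ^ 2)
        ≤ lam * Real.sqrt (∑ a, v a ^ 2))
  {f : V → ℝ} (hf : ∀ a, f a ^ 2 = 1)
  {b0 : ℝ} (hfb : |∑ a, f a| ≤ b0 * (Fintype.card V : ℝ))

include hf in
lemma TSN_Tstep (y : V → ℝ) : TSN (Tstep G d f y) = TSN (TAv G d y) :=
  TSN_sign_mul f _ hf

include hd hreg hlam hexp hf hfb in
lemma Tstep_two (y : V → ℝ) :
    TSN (Tstep G d f (Tstep G d f y)) ≤ (b0 + 2 * lam) * TSN y := by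
  rw [TSN_Tstep hf]
  exact key2 hd hreg hlam hexp hf hfb y

include hd hreg hlam hexp hf hfb in
lemma Tstep_even (j : ℕ) (y : V → ℝ) :
    TSN ((Tstep G d f)^[2 * j] y) ≤ (b0 + 2 * lam) ^ j * TSN y := by
  induction j generalizing y with
  | zero => simp
  | succ j ih =>
    have h2 : (Tstep G d f)^[2 * (j + 1)] y = (Tstep G d f)^[2 * j]
        (Tstep G d f (Tstep G d f y)) := by
      rw [show 2 * (j + 1) = 2 * j + 2 by ring, Function.iterate_add_apply]
      rfl
    rw [h2]
    calc TSN ((Tstep G d f)^[2 * j] (Tstep G d f (Tstep G d f y)))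
        ≤ (b0 + 2 * lam) ^ j * TSN (Tstep G d f (Tstep G d f y)) := ih _
      _ ≤ (b0 + 2 * lam) ^ j * ((b0 + 2 * lam) * TSN y) := by
          apply mul_le_mul_of_nonneg_left (Tstep_two hd hreg hlam hexp hf hfb y)
          have hb0 : 0 ≤ b0 := b0_nonneg hfb
          positivity
      _ = (b0 + 2 * lam) ^ (j + 1) * TSN y := by ring

include hf in
lemma TSN_f_eq : TSN f = Real.sqrt (Fintype.card V) := by
  unfold TSN
  congr 1
  rw [Finset.sum_congr rfl fun a _ => hf a, Finset.sum_const, Finset.card_univ,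
    nsmul_eq_mul, mul_one]

include hd hreg hlam hexp hf hfb in
lemma Tstep_iter_bound (K : ℕ) :
    TSN ((Tstep G d f)^[K] f) ≤ (b0 + 2 * lam) ^ ((K + 1) / 2) * Real.sqrt (Fintype.card V) := by
  have hb0 : 0 ≤ b0 := b0_nonneg hfb
  have hP : 0 ≤ b0 + 2 * lam := by linarith
  rcases Nat.even_or_odd K with ⟨j, hj⟩ | ⟨j, hj⟩
  · have hK : K = 2 * j := by omega
    have he : (2 * j + 1) / 2 = j := by omega
    rw [hK, he]
    calc TSN ((Tstep G d f)^[2 * j] f) ≤ (b0 + 2 * lam) ^ j * TSN f :=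
          Tstep_even hd hreg hlam hexp hf hfb j f
      _ = (b0 + 2 * lam) ^ j * Real.sqrt (Fintype.card V) := by rw [TSN_f_eq hf]
  · have he : (2 * j + 1 + 1) / 2 = j + 1 := by omega
    rw [hj, he]
    have hsplit : (Tstep G d f)^[2 * j + 1] f = (Tstep G d f)^[2 * j] (Tstep G d f f) := by
      rw [Function.iterate_add_apply]
      rfl
    rw [hsplit]
    calc TSN ((Tstep G d f)^[2 * j] (Tstep G d f f))
        ≤ (b0 + 2 * lam) ^ j * TSN (Tstep G d f f) :=
          Tstep_even hd hreg hlam hexp hf hfb j _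
      _ ≤ (b0 + 2 * lam) ^ j * ((b0 + lam) * Real.sqrt (Fintype.card V)) := by
          apply mul_le_mul_of_nonneg_left _ (by positivity)
          rw [TSN_Tstep hf]
          exact TAv_f_bound hd hreg hlam hexp hf hfb
      _ ≤ (b0 + 2 * lam) ^ j * ((b0 + 2 * lam) * Real.sqrt (Fintype.card V)) := by
          apply mul_le_mul_of_nonneg_left _ (by positivity)
          have := Real.sqrt_nonneg (Fintype.card V : ℝ)
          nlinarith
      _ = (b0 + 2 * lam) ^ (j + 1) * Real.sqrt (Fintype.card V) := by ring

end Iter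

/-- `w : Fin k → V` is a walk in `G`: consecutive vertices are adjacent. -/
def IsWalk {V : Type*} (G : SimpleGraph V) {k : ℕ} (w : Fin k → V) : Prop :=
  ∀ (m : ℕ) (h : m + 1 < k), G.Adj (w ⟨m, by omega⟩) (w ⟨m + 1, h⟩)

/-- The set `W_G(k)` of walks on `k` vertices of `G`. -/
noncomputable def walkSet {V : Type*} [Fintype V] (G : SimpleGraph V) (k : ℕ) :
    Finset (Fin k → V) :=
  Finset.univ.filter fun w => IsWalk G w

section Walks
variable {G : SimpleGraph V}

lemma mem_walkSet {k : ℕ} {w : Fin k → V} : w ∈ walkSet G k ↔ IsWalk G w := by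
  simp [walkSet]

lemma consApp_zero {k : ℕ} (a : V) (w : Fin (k+1) → V) (h : 0 < k + 2) :
    (Fin.cons a w : Fin (k+2) → V) ⟨0, h⟩ = a := by rw [Fin.mk_zero, Fin.cons_zero]

lemma consApp_succ {k : ℕ} (a : V) (w : Fin (k+1) → V) (m : ℕ) (h : m + 1 < k + 2) :
    (Fin.cons a w : Fin (k+2) → V) ⟨m+1, h⟩ = w ⟨m, by omega⟩ := by
  have e : (⟨m+1, h⟩ : Fin (k+2)) = (⟨m, by omega⟩ : Fin (k+1)).succ := rfl
  rw [e, Fin.cons_succ]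

lemma cons_tail_eq {k : ℕ} (w : Fin (k+2) → V) :
    (Fin.cons (w ⟨0, by omega⟩) (Fin.tail w) : Fin (k+2) → V) = w := by
  funext i
  rcases i with ⟨m, hm⟩
  cases m with
  | zero => rw [consApp_zero]
  | succ m => rw [consApp_succ]; rfl

lemma isWalk_cons_iff {k : ℕ} (a : V) (w : Fin (k+1) → V) :
    IsWalk G (Fin.cons a w) ↔ G.Adj a (w ⟨0, by omega⟩) ∧ IsWalk G w := by
  constructor
  · intro h
    refine ⟨?_, ?_⟩
    · have h0 := h 0 (by omega)
      rwa [consApp_zero, consApp_succ] at h0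
    · intro m hm
      have h1 := h (m+1) (by omega)
      rwa [consApp_succ, consApp_succ] at h1
  · rintro ⟨h0, hw⟩ m hm
    cases m with
    | zero => rw [consApp_zero, consApp_succ]; exact h0
    | succ m => rw [consApp_succ, consApp_succ]; exact hw m (by omega)

lemma walk_step {k : ℕ} (a : V) (F : (Fin (k+1) → V) → ℝ) :
    ∑ w ∈ (walkSet G (k+2)).filter (fun w => w ⟨0, by omega⟩ = a), F (Fin.tail w)
      = ∑ w ∈ (walkSet G (k+1)).filter (fun w => G.Adj a (w ⟨0, by omega⟩)), F w := by
  apply Finset.sum_nbij' (i := fun w => Fin.tail w)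
    (j := fun w => (Fin.cons a w : Fin (k+2) → V))
  · intro w hw
    rw [Finset.mem_filter, mem_walkSet] at hw
    obtain ⟨hw1, hw2⟩ := hw
    have hct := cons_tail_eq w
    rw [hw2] at hct
    have hrw : IsWalk G (Fin.cons a (Fin.tail w)) := by rw [hct]; exact hw1
    rw [isWalk_cons_iff] at hrw
    rw [Finset.mem_filter, mem_walkSet]
    exact ⟨hrw.2, hrw.1⟩
  · intro w hw
    rw [Finset.mem_filter, mem_walkSet] at hw
    obtain ⟨hw1, hw2⟩ := hw
    rw [Finset.mem_filter, mem_walkSet]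
    constructor
    · rw [isWalk_cons_iff]; exact ⟨hw2, hw1⟩
    · rw [consApp_zero]
  · intro w hw
    rw [Finset.mem_filter] at hw
    have hct := cons_tail_eq w
    rw [hw.2] at hct
    exact hct
  · intro w _
    exact Fin.tail_cons (α := fun _ : Fin (k+2) => V) a w
  · intro w _
    rfl

lemma walk_fiber {k : ℕ} (a : V) (F : (Fin (k+1) → V) → ℝ) :
    ∑ w ∈ (walkSet G (k+2)).filter (fun w => w ⟨0, by omega⟩ = a), F (Fin.tail w)
      = ∑ b, if G.Adj a b then
          (∑ w ∈ (walkSet G (k+1)).filter (fun w => w ⟨0, by omega⟩ = b), F w) else 0 := by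
  rw [walk_step a F, Finset.sum_filter]
  rw [← Finset.sum_fiberwise (walkSet G (k+1)) (fun w => w ⟨0, by omega⟩)
    (fun w => if G.Adj a (w ⟨0, by omega⟩) then F w else 0)]
  apply Finset.sum_congr rfl
  intro b _
  have hcongr : ∀ w ∈ (walkSet G (k+1)).filter (fun w => w ⟨0, by omega⟩ = b),
      (if G.Adj a (w ⟨0, by omega⟩) then F w else 0) = (if G.Adj a b then F w else 0) := by
    intro w hw
    rw [Finset.mem_filter] at hw
    rw [hw.2]
  rw [Finset.sum_congr rfl hcongr]
  split_ifs with h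
  · rfl
  · exact Finset.sum_const_zero

end Walks

section Vectors
variable {G : SimpleGraph V}

/-- Sum of sign-products over walks on `k+1` vertices starting at `b`. -/
noncomputable def Svec (G : SimpleGraph V) [Fintype V] (f : V → ℝ) (k : ℕ) : V → ℝ :=
  fun b => ∑ w ∈ (walkSet G (k+1)).filter (fun w => w ⟨0, by omega⟩ = b), ∏ m, f (w m)

/-- Number (as a real) of walks on `k+1` vertices starting at `b`. -/
noncomputable def Nwalk (G : SimpleGraph V) [Fintype V] (k : ℕ) : V → ℝ :=
  fun b => ∑ w ∈ (walkSet G (k+1)).filter (fun w => w ⟨0, by omega⟩ = b), (1 : ℝ)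

lemma walkSet_one : (walkSet G 1) = (Finset.univ : Finset (Fin 1 → V)) := by
  ext w
  simp only [walkSet, Finset.mem_filter, Finset.mem_univ, true_and, iff_true]
  intro m h
  exact absurd h (by omega)

lemma filter_start_one (b : V) :
    ((Finset.univ : Finset (Fin 1 → V)).filter (fun w => w ⟨0, by omega⟩ = b))
      = {fun _ => b} := by
  ext w
  simp only [Finset.mem_filter, Finset.mem_univ, true_and, Finset.mem_singleton]
  constructor
  · intro h; funext i
    have hi : i = ⟨0, by omega⟩ := Subsingleton.elim _ _
    rw [hi, h]
  · intro h; rw [h]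

lemma Svec_zero (f : V → ℝ) (b : V) : Svec G f 0 b = f b := by
  unfold Svec
  rw [walkSet_one, filter_start_one, Finset.sum_singleton, Fin.prod_univ_one]

lemma Nwalk_zero (b : V) : Nwalk G 0 b = 1 := by
  unfold Nwalk
  rw [walkSet_one, filter_start_one, Finset.sum_singleton]

lemma Svec_succ (f : V → ℝ) (k : ℕ) (a : V) :
    Svec G f (k+1) a = f a * ∑ b, (if G.Adj a b then Svec G f k b else 0) := by
  unfold Svec
  have hsplit : ∀ w ∈ (walkSet G (k+2)).filter (fun w => w ⟨0, by omega⟩ = a),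
      (∏ m, f (w m)) = f a * ∏ m : Fin (k+1), f (Fin.tail w m) := by
    intro w hw
    rw [Finset.mem_filter] at hw
    rw [Fin.prod_univ_succ]
    congr 1
    rw [← hw.2, ← Fin.mk_zero]
  rw [Finset.sum_congr rfl hsplit, ← Finset.mul_sum]
  congr 1
  exact walk_fiber a (fun w => ∏ m, f (w m))

lemma Nwalk_succ (k : ℕ) (a : V) :
    Nwalk G (k+1) a = ∑ b, (if G.Adj a b then Nwalk G k b else 0) := by
  unfold Nwalk
  exact walk_fiber a (fun _ => (1 : ℝ))

variable {d : ℕ} (hd : 1 ≤ d) (hreg : G.IsRegularOfDegree d)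

include hd hreg in
lemma Nwalk_eq (k : ℕ) (b : V) : Nwalk G k b = (d : ℝ) ^ k := by
  induction k generalizing b with
  | zero => rw [Nwalk_zero]; rfl
  | succ k ih =>
    rw [Nwalk_succ]
    have : ∀ c : V, (if G.Adj b c then Nwalk G k c else 0)
        = (if G.Adj b c then ((d:ℝ)^k) else 0) := by
      intro c; split_ifs with h
      · exact ih c
      · rfl
    rw [Finset.sum_congr rfl fun c _ => this c, ← Finset.sum_filter,
      Finset.sum_const]
    have hcard : (Finset.univ.filter fun c => G.Adj b c).card = d := by
      rw [← SimpleGraph.neighborFinset_eq_filter]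
      exact hreg b
    rw [hcard, nsmul_eq_mul]
    ring

include hd hreg in
lemma Svec_eq (f : V → ℝ) (k : ℕ) (b : V) :
    Svec G f k b = (d : ℝ) ^ k * (Tstep G d f)^[k] f b := by
  induction k generalizing b with
  | zero => rw [Svec_zero]; simp
  | succ k ih =>
    have hdne : (d : ℝ) ≠ 0 := by
      have : (0:ℕ) < d := hd
      positivity
    rw [Svec_succ]
    have h1 : ∀ c : V, (if G.Adj b c then Svec G f k c else 0)
        = (d : ℝ)^k * (if G.Adj b c then ((Tstep G d f)^[k] f c) else 0) := by
      intro c; split_ifs with h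
      · exact ih c
      · ring
    rw [Finset.sum_congr rfl fun c _ => h1 c, ← Finset.mul_sum]
    have h2 : (Tstep G d f)^[k+1] f b = f b * TAv G d ((Tstep G d f)^[k] f) b := by
      rw [Function.iterate_succ_apply']
      rfl
    rw [h2]
    have h3 : TAv G d ((Tstep G d f)^[k] f) b
        = (1 / (d:ℝ)) * ∑ c, (if G.Adj b c then ((Tstep G d f)^[k] f c) else 0) := by
      unfold TAv
      rw [Finset.mul_sum]
      apply Finset.sum_congr rfl
      intro c _
      split_ifs with h
      · ring
      · ring
    rw [h3]
    field_simp
    ring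

include hd hreg in
lemma walkSet_card (k : ℕ) :
    ((walkSet G (k+1)).card : ℝ) = (Fintype.card V : ℝ) * (d : ℝ) ^ k := by
  have h1 : ((walkSet G (k+1)).card : ℝ) = ∑ w ∈ walkSet G (k+1), (1:ℝ) := by
    rw [Finset.sum_const, nsmul_eq_mul, mul_one]
  rw [h1, ← Finset.sum_fiberwise (walkSet G (k+1)) (fun w => w ⟨0, by omega⟩)
    (fun _ => (1:ℝ))]
  have h2 : ∀ b : V, (∑ w ∈ (walkSet G (k+1)).filter (fun w => w ⟨0, by omega⟩ = b),
      (1:ℝ)) = (d:ℝ)^k := fun b => Nwalk_eq hd hreg k b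
  rw [Finset.sum_congr rfl fun b _ => h2 b, Finset.sum_const, nsmul_eq_mul]
  rw [Finset.card_univ]

lemma walk_sum_fiber (f : V → ℝ) (k : ℕ) :
    (∑ w ∈ walkSet G (k+1), ∏ m, f (w m)) = ∑ b, Svec G f k b := by
  rw [← Finset.sum_fiberwise (walkSet G (k+1)) (fun w => w ⟨0, by omega⟩)
    (fun w => ∏ m, f (w m))]
  rfl

end Vectors

lemma neg_one_pow_mod_two (m : ℕ) : (-1:ℝ) ^ (m % 2) = (-1:ℝ) ^ m := by
  rcases Nat.even_or_odd m with h | h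
  · have hm : m % 2 = 0 := Nat.even_iff.mp h
    rw [hm, pow_zero, Even.neg_one_pow h]
  · have hm : m % 2 = 1 := Nat.odd_iff.mp h
    rw [hm, pow_one, Odd.neg_one_pow h]

lemma neg_one_pow_val_sum {ι : Type*} (s : Finset ι) (g : ι → ZMod 2) :
    (-1:ℝ) ^ (∑ i ∈ s, g i).val = ∏ i ∈ s, (-1:ℝ) ^ (g i).val := by
  induction s using Finset.cons_induction with
  | empty => simp
  | cons a s ha ih =>
    rw [Finset.sum_cons, Finset.prod_cons, ← ih, ZMod.val_add, neg_one_pow_mod_two, pow_add]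

theorem stmt_17 (V : Type) [Fintype V] [Nonempty V]
    (G : SimpleGraph V) (d : ℕ) (hd : 1 ≤ d) (hreg : G.IsRegularOfDegree d)
    (lam : ℝ) (hlam : 0 ≤ lam)
    (hexp : ∀ v : V → ℝ, (∑ a, v a) = 0 →
      Real.sqrt (∑ a, (∑ b, (if G.Adj a b then (1 : ℝ) / (d : ℝ) else 0) * v b) ^ 2)
        ≤ lam * Real.sqrt (∑ a, v a ^ 2))
    (k : ℕ) (hk : 1 ≤ k) (β₀ : ℝ)
    (z : V → ZMod 2)
    (hbias : |(∑ a, (-1 : ℝ) ^ (z a).val) / (Fintype.card V : ℝ)| ≤ β₀) :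
    |(∑ w ∈ walkSet G k, (-1 : ℝ) ^ (∑ m, z (w m)).val) / ((walkSet G k).card : ℝ)|
      ≤ (β₀ + 2 * lam) ^ (k / 2) := by
  obtain ⟨K, rfl⟩ : ∃ K, k = K + 1 := ⟨k - 1, by omega⟩
  have hnpos : (0:ℝ) < (Fintype.card V : ℝ) := card_pos'
  set f : V → ℝ := fun a => (-1:ℝ) ^ (z a).val with hfdef
  have hf : ∀ a, f a ^ 2 = 1 := by
    intro a
    show ((-1:ℝ) ^ (z a).val) ^ 2 = 1
    rw [← pow_mul, mul_comm, pow_mul, neg_one_sq, one_pow]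
  have hfb : |∑ a, f a| ≤ β₀ * (Fintype.card V : ℝ) := by
    have h := hbias
    rw [abs_div, abs_of_pos hnpos, div_le_iff₀ hnpos] at h
    exact h
  have hnum : (∑ w ∈ walkSet G (K+1), (-1:ℝ) ^ (∑ m, z (w m)).val)
      = (d:ℝ)^K * ∑ b, (Tstep G d f)^[K] f b := by
    have h1 : ∀ w : Fin (K+1) → V, (-1:ℝ) ^ (∑ m, z (w m)).val = ∏ m, f (w m) :=
      fun w => neg_one_pow_val_sum Finset.univ (fun m => z (w m))
    rw [Finset.sum_congr rfl fun w _ => h1 w, walk_sum_fiber f K,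
      Finset.sum_congr rfl fun b _ => Svec_eq hd hreg f K b, ← Finset.mul_sum]
  have hcard : (((walkSet G (K+1)).card : ℕ) : ℝ)
      = (Fintype.card V : ℝ) * (d : ℝ) ^ K := walkSet_card hd hreg K
  rw [hnum, hcard]
  have hdpow : (0:ℝ) < (d:ℝ)^K := by
    have : (0:ℕ) < d := hd
    positivity
  have hE : ((d:ℝ)^K * ∑ b, (Tstep G d f)^[K] f b) / ((Fintype.card V : ℝ) * (d:ℝ)^K)
      = (∑ b, (Tstep G d f)^[K] f b) / (Fintype.card V : ℝ) := by
    field_simp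
  rw [hE]
  set v : V → ℝ := (Tstep G d f)^[K] f with hv
  have hvb : TSN v ≤ (β₀ + 2*lam) ^ ((K+1)/2) * Real.sqrt (Fintype.card V) :=
    Tstep_iter_bound hd hreg hlam hexp hf hfb K
  have hsum : |∑ b, v b| ≤ Real.sqrt (Fintype.card V) * TSN v := by
    have h := TSN_CS (fun _ : V => (1:ℝ)) v
    have e1 : (∑ a, (fun _ : V => (1:ℝ)) a * v a) = ∑ b, v b := by
      apply Finset.sum_congr rfl; intro b _; ring
    have e2 : TSN (fun _ : V => (1:ℝ)) = Real.sqrt (Fintype.card V) := by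
      rw [TSN_const]; simp
    rwa [e1, e2] at h
  have hsqrt : Real.sqrt (Fintype.card V : ℝ) * Real.sqrt (Fintype.card V : ℝ)
      = (Fintype.card V : ℝ) := Real.mul_self_sqrt (le_of_lt hnpos)
  rw [abs_div, abs_of_pos hnpos, div_le_iff₀ hnpos]
  have hP : (0:ℝ) ≤ (β₀ + 2*lam) ^ ((K+1)/2) := by
    have hb0 : 0 ≤ β₀ := b0_nonneg hfb
    positivity
  calc |∑ b, v b| ≤ Real.sqrt (Fintype.card V) * TSN v := hsum
    _ ≤ Real.sqrt (Fintype.card V) *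
        ((β₀ + 2*lam) ^ ((K+1)/2) * Real.sqrt (Fintype.card V)) :=
      mul_le_mul_of_nonneg_left hvb (Real.sqrt_nonneg _)
    _ = (β₀ + 2*lam) ^ ((K+1)/2) * (Fintype.card V : ℝ) := by
      linear_combination ((β₀ + 2*lam) ^ ((K+1)/2)) * hsqrt
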